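/- Let f be a submodular function on a finite ground set V with f(∅) = 0. Then the superdifferential at the empty set, ∂^f(∅) = {x ∈ ℝ^V : f(Y) − x(Y) ≤ f(∅) − x(∅) for all Y ⊆ V}, equals {x ∈ ℝ^V : x(j) ≥ f({j}) for all j ∈ V}. -/

import Mathlib

/-- The superdifferential at the empty set equals
`{x : x j ≥ f {j} for all j}` when `f ∅ = 0`. -/
theorem superdifferential_at_empty
    {V : Type*} [Fintype V] [DecidableEq V]
    (f : Finset V → ℝ)
    (hf : ∀ S T : Finset V, f S + f T ≥ f (S ∪ T) + f (S ∩ T))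
    (hf0 : f ∅ = 0) (x : V → ℝ) :
    (∀ Y : Finset V, f Y - (∑ i ∈ Y, x i) ≤ f ∅ - (∑ i ∈ (∅ : Finset V), x i)) ↔
      (∀ j : V, x j ≥ f {j}) := by
  constructor
  · intro h j
    have := h {j}
    simp [hf0] at this
    linarith
  · intro h Y
    simp [hf0]
    have key : ∀ Y : Finset V, f Y ≤ ∑ i ∈ Y, f {i} := by
      intro Y
      induction Y using Finset.induction with
      | empty => simp [hf0]
      | @insert a S ha ih =>
        have h1 := hf {a} S
        have h2 : ({a} : Finset V) ∩ S = ∅ := by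
          simp [Finset.singleton_inter_of_notMem ha]
        rw [h2, hf0] at h1
        rw [Finset.sum_insert ha]
        have : ({a} : Finset V) ∪ S = insert a S := by
          rw [Finset.insert_eq]
        rw [this] at h1
        linarith
    calc f Y ≤ ∑ i ∈ Y, f {i} := key Y
      _ ≤ ∑ i ∈ Y, x i := Finset.sum_le_sum fun i _ => h i
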